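/- Let f_ρ(x) = x⁴ − 6ρ³x² − 8ρ³x with ρ = 1 + √3. Then the multiset of finite critical values of f_ρ is {−υ + C, C, υ + C} where C = −720√3 − 1248 and υ = 72√(362√3 + 627); in particular the multiset of critical values of f_ρ is invariant under the affine map z ↦ −z + 2C, so f_ρ and −f_ρ + 2C have the same critical values. -/
import Mathlib


open Polynomial

theorem stmt14 :
    let ρ : ℝ := 1 + Real.sqrt 3
    let c0 : ℝ := -720 * Real.sqrt 3 - 1248
    let υ : ℝ := 72 * Real.sqrt (362 * Real.sqrt 3 + 627)
    let f : ℝ[X] := X ^ 4 - C (6 * ρ ^ 3) * X ^ 2 - C (8 * ρ ^ 3) * X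
    let g : ℝ[X] := -f + C (2 * c0)
    ((derivative f).roots.map (fun x => f.eval x)) = {-υ + c0, c0, υ + c0} ∧
    ((derivative g).roots.map (fun x => g.eval x)) =
      ((derivative f).roots.map (fun x => f.eval x)) := by
  intro ρ c0 υ f g
  set s : ℝ := Real.sqrt 3 with hsdef
  set d : ℝ := Real.sqrt (36 + 24 * s) with hddef
  set u : ℝ := Real.sqrt (362 * s + 627) with hudef
  have hs0 : 0 ≤ s := Real.sqrt_nonneg 3
  have hd0 : 0 ≤ d := Real.sqrt_nonneg _
  have hu0 : 0 ≤ u := Real.sqrt_nonneg _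
  have hs : s ^ 2 = 3 := Real.sq_sqrt (by norm_num)
  have hd : d ^ 2 = 36 + 24 * s := Real.sq_sqrt (by positivity)
  have hu : u ^ 2 = 362 * s + 627 := Real.sq_sqrt (by positivity)
  have hud : (144 + 84 * s) * d = 72 * u := by
    have h2 : ((144 + 84 * s) * d) ^ 2 = (72 * u) ^ 2 := by
      rw [mul_pow, mul_pow, hd, hu]
      linear_combination (834624 + 169344 * s) * hs
    exact (sq_eq_sq₀ (by positivity) (by positivity)).mp h2
  set r1 : ℝ := (4 + 2 * s + d) / 2 with hr1
  set r2 : ℝ := -(4 + 2 * s) with hr2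
  set r3 : ℝ := (4 + 2 * s - d) / 2 with hr3
  have hf' : derivative f = C 4 * ((X - C r1) * ((X - C r2) * (X - C r3))) := by
    apply Polynomial.funext
    intro x
    simp only [f, derivative_sub, derivative_mul, derivative_C, derivative_X_pow,
      derivative_X, eval_sub, eval_mul, eval_add, eval_pow, eval_C, eval_X,
      eval_natCast, zero_mul, mul_one, zero_add]
    rw [hr1, hr2, hr3]
    have hρ : ρ = 1 + s := rfl
    rw [hρ]
    ring_nf
    linear_combination ((-24 - 12 * s) * x + (-24 - 16 * s)) * hs + (x + 4 + 2 * s) * hd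
  have hroots : (derivative f).roots = {r1, r2, r3} := by
    rw [hf', roots_C_mul _ (by norm_num : (4 : ℝ) ≠ 0),
      roots_mul (mul_ne_zero (X_sub_C_ne_zero r1)
        (mul_ne_zero (X_sub_C_ne_zero r2) (X_sub_C_ne_zero r3))),
      roots_mul (mul_ne_zero (X_sub_C_ne_zero r2) (X_sub_C_ne_zero r3)),
      roots_X_sub_C, roots_X_sub_C, roots_X_sub_C]
    rfl
  have hρ : ρ = 1 + s := rfl
  have hc0 : c0 = -720 * s - 1248 := rfl
  have hυ : υ = 72 * u := rfl
  have hv1 : f.eval r1 = -υ + c0 := by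
    simp only [f, eval_sub, eval_mul, eval_pow, eval_C, eval_X]
    rw [hr1, hρ, hυ, hc0]
    linear_combination (-489 - 290 * s - 60 * d - 85 * s ^ 2 - 32 * s * d - 6 * s ^ 3
        - 6 * s ^ 2 * d) * hs
      + (27 / 4 + 3 * s + d - 3 * s ^ 2 + (1 / 2) * s * d + (1 / 16) * d ^ 2
        - (3 / 2) * s ^ 3) * hd
      - hud
  have hv2 : f.eval r2 = c0 := by
    simp only [f, eval_sub, eval_mul, eval_pow, eval_C, eval_X]
    rw [hr2, hρ, hc0]
    linear_combination (-480 - 320 * s - 136 * s ^ 2 - 24 * s ^ 3) * hs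
  have hv3 : f.eval r3 = υ + c0 := by
    simp only [f, eval_sub, eval_mul, eval_pow, eval_C, eval_X]
    rw [hr3, hρ, hυ, hc0]
    linear_combination (-489 - 290 * s + 60 * d - 85 * s ^ 2 + 32 * s * d - 6 * s ^ 3
        + 6 * s ^ 2 * d) * hs
      + (27 / 4 + 3 * s - d - 3 * s ^ 2 - (1 / 2) * s * d + (1 / 16) * d ^ 2
        - (3 / 2) * s ^ 3) * hd
      + hud
  have hmap : ((derivative f).roots.map (fun x => f.eval x)) = {-υ + c0, c0, υ + c0} := by
    rw [hroots]
    simp only [Multiset.insert_eq_cons, Multiset.map_cons, Multiset.map_singleton,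
      hv1, hv2, hv3]
  refine ⟨hmap, ?_⟩
  have hg' : derivative g = C (-1) * derivative f := by
    simp only [g, derivative_add, derivative_neg, derivative_C, add_zero, map_neg, map_one,
      neg_mul, one_mul]
  have hgroots : (derivative g).roots = {r1, r2, r3} := by
    rw [hg', roots_C_mul _ (by norm_num : (-1 : ℝ) ≠ 0), hroots]
  have hgeval : ∀ x : ℝ, g.eval x = -f.eval x + 2 * c0 := by
    intro x; simp [g]
  have tri : ∀ a b c : ℝ, ({a, b, c} : Multiset ℝ) = {c, b, a} := by
    intro a b c
    ext x
    simp only [Multiset.insert_eq_cons, Multiset.count_cons, Multiset.count_singleton]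
    ring
  rw [hgroots, hmap]
  simp only [Multiset.insert_eq_cons, Multiset.map_cons, Multiset.map_singleton, hgeval,
    hv1, hv2, hv3]
  have e1 : -(-υ + c0) + 2 * c0 = υ + c0 := by ring
  have e2 : -c0 + 2 * c0 = c0 := by ring
  have e3 : -(υ + c0) + 2 * c0 = -υ + c0 := by ring
  rw [e1, e2, e3]
  have := tri (υ + c0) c0 (-υ + c0)
  simpa only [Multiset.insert_eq_cons] using this
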